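/- Let y = RS(x, α, β) with 1 ≥ α > β ≥ 0. The number of indices t ∈ {1,...,T−1} with y^t ≠ y^{t+1} is at most (1/(α−β)) · ∑_{t=1}^{T-1} |x^{t+1} − x^t|. -/
import Mathlib


/- The two-threshold rounding scheme `RS`.  Given a time horizon `T`, a sequence
`x : ℕ → ℝ` (indices `0, …, T-1`) of values in `[0,1]` and thresholds `α ≥ β`,
it produces a `{0,1}`-valued sequence `y`:
* if `x t ≥ α` then `y t = 1`;
* if `x t ≤ β` then `y t = 0`;
* on a maximal interval `[t₁,t₂]` with `β < x < α` throughout, `y = 1` iff both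
  (`t₁ = 0` or `x (t₁-1) ≥ α`) and (`t₂ = T-1` or `x (t₂+1) ≥ α`);
  this is expressed below by saying that the nearest non-strict index on each
  side (within the horizon), when it exists, carries a value `≥ α`. -/
open Classical in
noncomputable def RS (T : ℕ) (x : ℕ → ℝ) (α β : ℝ) (t : ℕ) : ℝ :=
  if α ≤ x t then 1
  else if x t ≤ β then 0
  else if ((∀ s, s ≤ t → β < x s ∧ x s < α) ∨
           (∃ s, s < t ∧ α ≤ x s ∧ ∀ u, s < u → u ≤ t → β < x u ∧ x u < α)) ∧
          ((∀ s, t ≤ s → s < T → β < x s ∧ x s < α) ∨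
           (∃ s, t < s ∧ s < T ∧ α ≤ x s ∧ ∀ u, t ≤ u → u < s → β < x u ∧ x u < α))
  then 1 else 0


namespace StmtFour

/-- left condition appearing in `RS`. -/
def Lc (x : ℕ → ℝ) (α β : ℝ) (t : ℕ) : Prop :=
  (∀ s, s ≤ t → β < x s ∧ x s < α) ∨
  (∃ s, s < t ∧ α ≤ x s ∧ ∀ u, s < u → u ≤ t → β < x u ∧ x u < α)

/-- right condition appearing in `RS`. -/
def Rc (T : ℕ) (x : ℕ → ℝ) (α β : ℝ) (t : ℕ) : Prop :=
  (∀ s, t ≤ s → s < T → β < x s ∧ x s < α) ∨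
  (∃ s, t < s ∧ s < T ∧ α ≤ x s ∧ ∀ u, t ≤ u → u < s → β < x u ∧ x u < α)

section

variable {T : ℕ} {x : ℕ → ℝ} {α β : ℝ} {t : ℕ}

lemma RS_alpha (h : α ≤ x t) : RS T x α β t = 1 := by
  unfold RS; rw [if_pos h]

lemma RS_beta (h1 : ¬ α ≤ x t) (h : x t ≤ β) : RS T x α β t = 0 := by
  unfold RS; rw [if_neg h1, if_pos h]

lemma RS_gray_one (h1 : ¬ α ≤ x t) (h2 : ¬ x t ≤ β)
    (hL : Lc x α β t) (hR : Rc T x α β t) : RS T x α β t = 1 := by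
  unfold RS; rw [if_neg h1, if_neg h2, if_pos ⟨hL, hR⟩]

lemma RS_gray_zero (h1 : ¬ α ≤ x t) (h2 : ¬ x t ≤ β)
    (h : ¬ (Lc x α β t ∧ Rc T x α β t)) : RS T x α β t = 0 := by
  unfold RS; rw [if_neg h1, if_neg h2]; exact if_neg h

lemma Lc_iff (hG : β < x t ∧ x t < α) (hG1 : β < x (t+1) ∧ x (t+1) < α) :
    Lc x α β t ↔ Lc x α β (t+1) := by
  constructor
  · rintro (hall | ⟨s, hst, has, hall⟩)
    · exact Or.inl (fun s hs => by
        rcases eq_or_lt_of_le hs with rfl | h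
        · exact hG1
        · exact hall s (by omega))
    · exact Or.inr ⟨s, by omega, has, fun u hu hu' => by
        rcases eq_or_lt_of_le hu' with rfl | h
        · exact hG1
        · exact hall u hu (by omega)⟩
  · rintro (hall | ⟨s, hst, has, hall⟩)
    · exact Or.inl (fun s hs => hall s (by omega))
    · rcases eq_or_lt_of_le (Nat.lt_succ_iff.mp hst) with rfl | h
      · exact absurd has (not_le.mpr hG.2)
      · exact Or.inr ⟨s, h, has, fun u hu hu' => hall u hu (by omega)⟩

lemma Rc_iff (hG : β < x t ∧ x t < α) (hG1 : β < x (t+1) ∧ x (t+1) < α) :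
    Rc T x α β t ↔ Rc T x α β (t+1) := by
  constructor
  · rintro (hall | ⟨s, hts, hsT, has, hall⟩)
    · exact Or.inl (fun s hs hsT => hall s (by omega) hsT)
    · rcases eq_or_lt_of_le (Nat.succ_le_of_lt hts) with h | h
      · exact absurd has (h ▸ not_le.mpr hG1.2)
      · exact Or.inr ⟨s, h, hsT, has, fun u hu hu' => hall u (by omega) hu'⟩
  · rintro (hall | ⟨s, hts, hsT, has, hall⟩)
    · refine Or.inl (fun s hs hsT => ?_)
      rcases eq_or_lt_of_le hs with rfl | h
      · exact hG
      · exact hall s (by omega) hsT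
    · exact Or.inr ⟨s, by omega, hsT, has, fun u hu hu' => by
        rcases eq_or_lt_of_le hu with rfl | h
        · exact hG
        · exact hall u (by omega) hu'⟩

lemma RS_gray_gray (hG : β < x t ∧ x t < α) (hG1 : β < x (t+1) ∧ x (t+1) < α) :
    RS T x α β t = RS T x α β (t+1) := by
  have h1 : ¬ α ≤ x t := not_le.mpr hG.2
  have h2 : ¬ x t ≤ β := not_le.mpr hG.1
  have h1' : ¬ α ≤ x (t+1) := not_le.mpr hG1.2
  have h2' : ¬ x (t+1) ≤ β := not_le.mpr hG1.1
  by_cases hC : Lc x α β t ∧ Rc T x α β t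
  · rw [RS_gray_one h1 h2 hC.1 hC.2,
      RS_gray_one h1' h2' ((Lc_iff hG hG1).mp hC.1) ((Rc_iff hG hG1).mp hC.2)]
  · rw [RS_gray_zero h1 h2 hC,
      RS_gray_zero h1' h2' (fun h => hC ⟨(Lc_iff hG hG1).mpr h.1, (Rc_iff hG hG1).mpr h.2⟩)]

lemma RS_gray_beta (ht : t + 1 < T) (hG : β < x t ∧ x t < α) (hb : x (t+1) ≤ β)
    (hαβ : β < α) : RS T x α β t = 0 := by
  refine RS_gray_zero (not_le.mpr hG.2) (not_le.mpr hG.1) (fun h => ?_)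
  rcases h.2 with hall | ⟨s, hts, hsT, has, hall⟩
  · exact absurd hb (not_le.mpr (hall (t+1) (by omega) ht).1)
  · have hcase : s = t + 1 ∨ t + 1 < s := by omega
    rcases hcase with rfl | h
    · linarith
    · exact absurd hb (not_le.mpr (hall (t+1) (by omega) h).1)

lemma RS_beta_gray (hb : x t ≤ β) (hG1 : β < x (t+1) ∧ x (t+1) < α)
    (hαβ : β < α) : RS T x α β (t+1) = 0 := by
  refine RS_gray_zero (not_le.mpr hG1.2) (not_le.mpr hG1.1) (fun h => ?_)
  rcases h.1 with hall | ⟨s, hst, has, hall⟩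
  · exact absurd hb (not_le.mpr (hall t (by omega)).1)
  · rcases eq_or_lt_of_le (Nat.lt_succ_iff.mp hst) with rfl | h
    · linarith
    · exact absurd hb (not_le.mpr (hall t h (by omega)).1)

/-- On a gray point, a jump forces the next value to be `≥ α`. -/
lemma gray_jump_right (ht : t + 1 < T) (hαβ : β < α) (hG : β < x t ∧ x t < α)
    (hj : RS T x α β t ≠ RS T x α β (t+1)) : α ≤ x (t+1) := by
  by_contra h
  rcases le_or_gt (x (t+1)) β with hb | hg
  · exact hj (by rw [RS_gray_beta ht hG hb hαβ,
      RS_beta (by linarith) hb])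
  · exact hj (RS_gray_gray hG ⟨hg, not_le.mp h⟩)

end

open Classical in
noncomputable def lft (x : ℕ → ℝ) (α β : ℝ) (t : ℕ) : ℕ :=
  Nat.findGreatest (fun s => ¬ (β < x s ∧ x s < α)) t

noncomputable def rgt (x : ℕ → ℝ) (α β : ℝ) (t : ℕ) : ℕ :=
  sInf {s : ℕ | t + 1 ≤ s ∧ ¬ (β < x s ∧ x s < α)}

section

variable {T : ℕ} {x : ℕ → ℝ} {α β : ℝ} {t : ℕ}

lemma lft_le : lft x α β t ≤ t := Nat.findGreatest_le t

lemma le_lft {s : ℕ} (h : s ≤ t) (h' : ¬ (β < x s ∧ x s < α)) : s ≤ lft x α β t := by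
  classical
  exact Nat.le_findGreatest h h'

lemma lft_eq_self (h : ¬ (β < x t ∧ x t < α)) : lft x α β t = t :=
  le_antisymm lft_le (le_lft le_rfl h)

lemma rgt_eq_succ (h : ¬ (β < x (t+1) ∧ x (t+1) < α)) : rgt x α β t = t + 1 := by
  have hm : t + 1 ∈ {s : ℕ | t + 1 ≤ s ∧ ¬ (β < x s ∧ x s < α)} := ⟨le_rfl, h⟩
  exact le_antisymm (Nat.sInf_le hm) (Nat.sInf_mem ⟨t+1, hm⟩).1

lemma lft_notGray (h : ∃ s, s ≤ t ∧ ¬ (β < x s ∧ x s < α)) :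
    ¬ (β < x (lft x α β t) ∧ x (lft x α β t) < α) := by
  obtain ⟨s, hs, hs'⟩ := h
  unfold lft
  exact Nat.findGreatest_spec (P := fun u => ¬ (β < x u ∧ x u < α)) hs hs'

lemma lft_max {v : ℕ} (h : lft x α β t < v) (h' : v ≤ t) : β < x v ∧ x v < α := by
  by_contra hc
  exact Nat.findGreatest_is_greatest h h' hc

/-- Main structure lemma for a jump. -/
lemma jump_struct (hαβ : β < α) (ht : t + 1 < T)
    (hj : RS T x α β t ≠ RS T x α β (t+1)) :
    lft x α β t ≤ t ∧ t + 1 ≤ rgt x α β t ∧ rgt x α β t < T ∧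
    ¬ (β < x (rgt x α β t) ∧ x (rgt x α β t) < α) ∧
    (∀ v, t + 1 ≤ v → v < rgt x α β t → β < x v ∧ x v < α) ∧
    (∀ v, lft x α β t < v → v ≤ t → β < x v ∧ x v < α) ∧
    ((α ≤ x (lft x α β t) ∧ x (rgt x α β t) ≤ β) ∨
      (x (lft x α β t) ≤ β ∧ α ≤ x (rgt x α β t))) ∧
    (t + 1 < rgt x α β t → x (rgt x α β t) ≤ β) := by
  have tri : ∀ s, α ≤ x s ∨ x s ≤ β ∨ (β < x s ∧ x s < α) := by
    intro s
    rcases le_or_gt α (x s) with h | h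
    · exact Or.inl h
    rcases le_or_gt (x s) β with h' | h'
    · exact Or.inr (Or.inl h')
    · exact Or.inr (Or.inr ⟨h', h⟩)
  rcases tri t with h1 | h1 | h1 <;> rcases tri (t+1) with h2 | h2 | h2
  · -- (α, α) : no jump
    exact absurd (by rw [RS_alpha h1, RS_alpha h2]) hj
  · -- (α, β) : single-step jump
    have hl : lft x α β t = t := lft_eq_self (fun h => absurd h1 (not_le.mpr h.2))
    have hr : rgt x α β t = t + 1 := rgt_eq_succ (fun h => absurd h2 (not_le.mpr h.1))
    rw [hl, hr]
    exact ⟨le_rfl, le_rfl, ht, fun h => absurd h2 (not_le.mpr h.1),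
      fun v hv hv' => absurd (hv.trans_lt hv') (lt_irrefl _),
      fun v hv hv' => absurd (hv.trans_le hv') (lt_irrefl _), Or.inl ⟨h1, h2⟩,
      fun h => h2⟩
  · -- (α, gray) : jump extends right
    have hl : lft x α β t = t := lft_eq_self (fun h => absurd h1 (not_le.mpr h.2))
    have hRS : RS T x α β t = 1 := RS_alpha h1
    have hL1 : Lc x α β (t+1) := Or.inr ⟨t, by omega, h1, fun u hu hu' => by
      have : u = t + 1 := by omega
      exact this ▸ h2⟩
    have hR1 : ¬ Rc T x α β (t+1) := by
      intro hR
      exact hj (by rw [hRS, RS_gray_one (not_le.mpr h2.2) (not_le.mpr h2.1) hL1 hR])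
    have hex : ∃ s, (t + 1) + 1 ≤ s ∧ s < T ∧ ¬ (β < x s ∧ x s < α) := by
      by_contra hc
      push_neg at hc
      exact hR1 (Or.inl (fun s hs hsT => by
        rcases eq_or_lt_of_le hs with rfl | h
        · exact h2
        · exact hc s h hsT))
    obtain ⟨s₀, hs₀1, hs₀2, hs₀3⟩ := hex
    have hne : ({s : ℕ | t + 1 ≤ s ∧ ¬ (β < x s ∧ x s < α)}).Nonempty :=
      ⟨s₀, by omega, hs₀3⟩
    have hmem := Nat.sInf_mem hne
    set r := rgt x α β t with hrdef
    have hr1 : t + 1 ≤ r := hmem.1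
    have hrG : ¬ (β < x r ∧ x r < α) := hmem.2
    have hrT : r < T := lt_of_le_of_lt (Nat.sInf_le ⟨by omega, hs₀3⟩) hs₀2
    have hmin : ∀ v, t + 1 ≤ v → v < r → β < x v ∧ x v < α := by
      intro v hv hvr
      by_contra hc
      exact Nat.notMem_of_lt_sInf hvr ⟨hv, hc⟩
    have hrne : r ≠ t + 1 := fun h => hrG (h ▸ h2)
    have hrb : x r ≤ β := by
      rcases tri r with h | h | h
      · exact absurd (Or.inr ⟨r, by omega, hrT, h,
          fun u hu hu' => hmin u hu hu'⟩) hR1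
      · exact h
      · exact absurd h hrG
    rw [hl]
    exact ⟨le_rfl, hr1, hrT, hrG, hmin,
      fun v hv hv' => absurd (hv.trans_le hv') (lt_irrefl _),
      Or.inl ⟨h1, hrb⟩, fun _ => hrb⟩
  · -- (β, α) : single-step jump
    have hl : lft x α β t = t := lft_eq_self (fun h => absurd h1 (not_le.mpr h.1))
    have hr : rgt x α β t = t + 1 := rgt_eq_succ (fun h => absurd h2 (not_le.mpr h.2))
    rw [hl, hr]
    exact ⟨le_rfl, le_rfl, ht, fun h => absurd h2 (not_le.mpr h.2),
      fun v hv hv' => absurd (hv.trans_lt hv') (lt_irrefl _),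
      fun v hv hv' => absurd (hv.trans_le hv') (lt_irrefl _), Or.inr ⟨h1, h2⟩,
      fun h => absurd h (lt_irrefl _)⟩
  · -- (β, β) : no jump
    exact absurd (by rw [RS_beta (by linarith) h1, RS_beta (by linarith) h2]) hj
  · -- (β, gray) : no jump
    exact absurd (by rw [RS_beta (by linarith) h1, RS_beta_gray h1 h2 hαβ]) hj
  · -- (gray, α) : jump extends left
    have hr : rgt x α β t = t + 1 := rgt_eq_succ (fun h => absurd h2 (not_le.mpr h.2))
    have hRS1 : RS T x α β (t+1) = 1 := RS_alpha h2
    have hR0 : Rc T x α β t := Or.inr ⟨t+1, by omega, ht, h2, fun u hu hu' => by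
      have : u = t := by omega
      exact this ▸ h1⟩
    have hL0 : ¬ Lc x α β t := by
      intro hL
      exact hj (by rw [hRS1, RS_gray_one (not_le.mpr h1.2) (not_le.mpr h1.1) hL hR0])
    have hex : ∃ s, s ≤ t ∧ ¬ (β < x s ∧ x s < α) := by
      by_contra hc
      push_neg at hc
      exact hL0 (Or.inl hc)
    obtain ⟨s₀, hs₀1, hs₀2⟩ := hex
    have hlG : ¬ (β < x (lft x α β t) ∧ x (lft x α β t) < α) :=
      lft_notGray ⟨s₀, hs₀1, hs₀2⟩
    have hlt : lft x α β t ≤ t := lft_le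
    have hmax : ∀ v, lft x α β t < v → v ≤ t → β < x v ∧ x v < α :=
      fun v hv hv' => lft_max hv hv'
    have hlne : lft x α β t ≠ t := fun h => hlG (by rw [h]; exact h1)
    have hlb : x (lft x α β t) ≤ β := by
      rcases tri (lft x α β t) with h | h | h
      · exact absurd (Or.inr ⟨lft x α β t, by omega, h,
          fun u hu hu' => hmax u hu hu'⟩) hL0
      · exact h
      · exact absurd h hlG
    rw [hr]
    exact ⟨hlt, le_rfl, ht, fun h => absurd h2 (not_le.mpr h.2),
      fun v hv hv' => absurd (hv.trans_lt hv') (lt_irrefl _), hmax,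
      Or.inr ⟨hlb, h2⟩, fun h => absurd h (lt_irrefl _)⟩
  · -- (gray, β) : no jump
    exact absurd (by rw [RS_gray_beta ht h1 h2 hαβ, RS_beta (by linarith) h2]) hj
  · -- (gray, gray) : no jump
    exact absurd (RS_gray_gray h1 h2) hj

end

lemma abs_telescope (x : ℕ → ℝ) {a b : ℕ} (hab : a ≤ b) :
    |x b - x a| ≤ ∑ s ∈ Finset.Ico a b, |x (s+1) - x s| := by
  induction b, hab using Nat.le_induction with
  | base => simp
  | succ b hab ih =>
    rw [Finset.sum_Ico_succ_top hab]
    calc |x (b+1) - x a| ≤ |x (b+1) - x b| + |x b - x a| := abs_sub_le _ _ _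
      _ ≤ |x (b+1) - x b| + ∑ s ∈ Finset.Ico a b, |x (s+1) - x s| := by linarith
      _ = _ := by ring

end StmtFour


open Classical in
/-- the number of jumps of `y = RS(x,α,β)` is at most
`(1/(α-β)) · ∑_t |x^{t+1} - x^t|`. -/
theorem stmt_4 (T : ℕ) (x : ℕ → ℝ) (α β : ℝ)
    (hx : ∀ t, t < T → 0 ≤ x t ∧ x t ≤ 1)
    (hα : α ≤ 1) (hαβ : β < α) (hβ : 0 ≤ β) :
    (((Finset.range (T - 1)).filter
        (fun t => RS T x α β t ≠ RS T x α β (t + 1))).card : ℝ) ≤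
      (1 / (α - β)) * ∑ t ∈ Finset.range (T - 1), |x (t + 1) - x t| := by
  classical
  have hpos : (0:ℝ) < α - β := by linarith
  set J := (Finset.range (T - 1)).filter
      (fun t => RS T x α β t ≠ RS T x α β (t + 1)) with hJ
  have hmem : ∀ t ∈ J, t + 1 < T ∧ RS T x α β t ≠ RS T x α β (t+1) := by
    intro t htJ
    rw [hJ, Finset.mem_filter, Finset.mem_range] at htJ
    exact ⟨by omega, htJ.2⟩
  have key : ∀ a ∈ J, ∀ b ∈ J, a < b →
      StmtFour.rgt x α β a ≤ StmtFour.lft x α β b := by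
    intro a haJ b hbJ hab
    obtain ⟨haT, hja⟩ := hmem a haJ
    obtain ⟨hbT, hjb⟩ := hmem b hbJ
    obtain ⟨_, har1, _, harG, hamin, _, _, harb⟩ := StmtFour.jump_struct hαβ haT hja
    have hrb : StmtFour.rgt x α β a ≤ b := by
      by_contra hc
      push_neg at hc
      have hGb : β < x b ∧ x b < α := hamin b (by omega) hc
      have hba : α ≤ x (b+1) := StmtFour.gray_jump_right hbT hαβ hGb hjb
      rcases eq_or_lt_of_le (show b + 1 ≤ StmtFour.rgt x α β a by omega) with h | h
      · have h' := harb (by omega)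
        rw [← h] at h'
        linarith
      · exact absurd (hamin (b+1) (by omega) h).2 (not_lt.mpr hba)
    exact StmtFour.le_lft hrb harG
  have hdisj : (↑J : Set ℕ).PairwiseDisjoint
      (fun t => Finset.Ico (StmtFour.lft x α β t) (StmtFour.rgt x α β t)) := by
    intro a ha b hb hne
    rcases hne.lt_or_gt with h | h
    · have hk := key a ha b hb h
      refine Finset.disjoint_left.mpr (fun s hs hs' => ?_)
      rw [Finset.mem_Ico] at hs hs'
      omega
    · have hk := key b hb a ha h
      refine Finset.disjoint_left.mpr (fun s hs hs' => ?_)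
      rw [Finset.mem_Ico] at hs hs'
      omega
  have hperjump : ∀ t ∈ J, α - β ≤
      ∑ s ∈ Finset.Ico (StmtFour.lft x α β t) (StmtFour.rgt x α β t),
        |x (s+1) - x s| := by
    intro t htJ
    obtain ⟨htT, hjt⟩ := hmem t htJ
    obtain ⟨hl, hr, _, _, _, _, hcross, _⟩ := StmtFour.jump_struct hαβ htT hjt
    have hlr : StmtFour.lft x α β t ≤ StmtFour.rgt x α β t := by omega
    have h1 : α - β ≤ |x (StmtFour.rgt x α β t) - x (StmtFour.lft x α β t)| := by
      rcases hcross with ⟨ha', hb'⟩ | ⟨hb', ha'⟩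
      · rw [abs_sub_comm]
        calc α - β ≤ x (StmtFour.lft x α β t) - x (StmtFour.rgt x α β t) := by linarith
          _ ≤ _ := le_abs_self _
      · calc α - β ≤ x (StmtFour.rgt x α β t) - x (StmtFour.lft x α β t) := by linarith
          _ ≤ _ := le_abs_self _
    exact h1.trans (StmtFour.abs_telescope x hlr)
  have hsub : J.biUnion (fun t => Finset.Ico (StmtFour.lft x α β t)
      (StmtFour.rgt x α β t)) ⊆ Finset.range (T-1) := by
    intro s hs
    rw [Finset.mem_biUnion] at hs
    obtain ⟨t, htJ, hst⟩ := hs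
    rw [Finset.mem_Ico] at hst
    obtain ⟨htT, hjt⟩ := hmem t htJ
    obtain ⟨_, _, hrT, _⟩ := StmtFour.jump_struct hαβ htT hjt
    rw [Finset.mem_range]
    omega
  rw [one_div, inv_mul_eq_div, le_div_iff₀ hpos]
  calc (J.card : ℝ) * (α - β) = ∑ _t ∈ J, (α - β) := by
        rw [Finset.sum_const, nsmul_eq_mul]
    _ ≤ ∑ t ∈ J, ∑ s ∈ Finset.Ico (StmtFour.lft x α β t) (StmtFour.rgt x α β t),
          |x (s+1) - x s| := Finset.sum_le_sum hperjump
    _ = ∑ s ∈ J.biUnion (fun t => Finset.Ico (StmtFour.lft x α β t)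
          (StmtFour.rgt x α β t)), |x (s+1) - x s| := (Finset.sum_biUnion hdisj).symm
    _ ≤ ∑ s ∈ Finset.range (T-1), |x (s+1) - x s| :=
        Finset.sum_le_sum_of_subset_of_nonneg hsub (fun s _ _ => abs_nonneg _)
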